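/- Let d₁ ≤ ⋯ ≤ d_k and let R_ii ∈ S^{d_i}_≥ have eigendecomposition R_ii = U_ii Λ_ii U_ii^T with decreasing eigenvalues λ_{1,ii} ≥ ⋯ ≥ λ_{d_i,ii}. Define R_m ∈ ℝ^{q×q} (q = d₁+⋯+d_k) as the block matrix with diagonal blocks R_ii and off-diagonal blocks Ψ_ij = U_ii Λ_ii^{1/2} Π_ij Λ_jj^{1/2} U_jj^T, where Π_ij ∈ ℝ^{d_i × d_j} is the matrix (I_{d_i} 0). Then, setting λ_{j,ii} = 0 for j > d_i, the multiset of eigenvalues of R_m is {λ_{j,11} + λ_{j,22} + ⋯ + λ_{j,kk} : j = 1,…,q}. -/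

import Mathlib

open Matrix Polynomial

/-- The positive semidefinite square root `A^{1/2}` of a matrix
(junk value `0` if `A` is not positive semidefinite). -/
noncomputable def msqrt {n : Type*} [Fintype n] [DecidableEq n]
    (A : Matrix n n ℝ) : Matrix n n ℝ := by
  classical exact if h : A.PosSemidef then
    h.1.eigenvectorUnitary.1 * diagonal (((↑) : ℝ → ℝ) ∘ (√·) ∘ h.1.eigenvalues) *
      (star h.1.eigenvectorUnitary : Matrix n n ℝ) else 0

/-- The squared Bures-Wasserstein distance
`d_W²(R, S) = tr R + tr S − 2 tr((R^{1/2} S R^{1/2})^{1/2})`. -/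
noncomputable def dWsq {n : Type*} [Fintype n] [DecidableEq n]
    (R S : Matrix n n ℝ) : ℝ :=
  R.trace + S.trace - 2 * (msqrt (msqrt R * S * msqrt R)).trace

/-- The block matrix `R_m` with diagonal blocks `R_ii = U_ii Λ_ii U_iiᵀ` and off-diagonal
blocks `Ψ_ij = U_ii Λ_ii^{1/2} Π_ij Λ_jj^{1/2} U_jjᵀ`, where `Π_ij ∈ ℝ^{d_i × d_j}` is the
upper-left block `(I 0)` of the identity.  Entrywise:
`(R_m)_{(i,a),(j,b)} = ∑_{r,s : r = s} U_i[a,r] √(λ_{r,i}) √(λ_{s,j}) U_j[b,s]`. -/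
noncomputable def Rmax {k : ℕ} (d : Fin k → ℕ)
    (U : ∀ i, Matrix (Fin (d i)) (Fin (d i)) ℝ) (lam : ∀ i, Fin (d i) → ℝ) :
    Matrix (Σ i, Fin (d i)) (Σ i, Fin (d i)) ℝ :=
  fun p q => ∑ r : Fin (d p.1), ∑ s : Fin (d q.1),
    if (r : ℕ) = (s : ℕ) then
      U p.1 p.2 r * Real.sqrt (lam p.1 r) * Real.sqrt (lam q.1 s) * U q.1 q.2 s
    else 0

lemma charpoly_conj_orth {n : Type*} [Fintype n] [DecidableEq n]
    (P M : Matrix n n ℝ) (h : P * Pᵀ = 1) :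
    (P * M * Pᵀ).charpoly = M.charpoly := by
  have hmap : P.map (C : ℝ → ℝ[X]) * Pᵀ.map C = 1 := by
    rw [← Matrix.map_mul (f := (C : ℝ →+* ℝ[X])), h]
    exact Matrix.map_one _ (map_zero C) (map_one C)
  have key : charmatrix (P * M * Pᵀ) = P.map C * charmatrix M * Pᵀ.map C := by
    unfold charmatrix
    rw [Matrix.mul_sub, Matrix.sub_mul]
    congr 1
    · rw [((Matrix.scalar_commute (X : ℝ[X]) (Commute.all X) _).symm).eq, Matrix.mul_assoc, hmap,
        Matrix.mul_one]
    · simp only [RingHom.mapMatrix_apply]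
      rw [Matrix.map_mul (f := (C : ℝ →+* ℝ[X])), Matrix.map_mul (f := (C : ℝ →+* ℝ[X]))]
  rw [Matrix.charpoly, key, det_mul, det_mul, Matrix.charpoly, mul_right_comm,
    ← det_mul, hmap, det_one, one_mul]

lemma eval_charpoly'' {n : Type*} [Fintype n] [DecidableEq n]
    (M : Matrix n n ℝ) (x : ℝ) :
    M.charpoly.eval x = (Matrix.diagonal (fun _ => x) - M).det := by
  rw [Matrix.charpoly]
  rw [show Polynomial.eval x (charmatrix M).det = (Polynomial.evalRingHom x) (charmatrix M).det
    from rfl, RingHom.map_det]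
  congr 1
  ext i j
  by_cases h : i = j
  · subst h; simp [charmatrix_apply_eq, diagonal_apply]
  · simp [charmatrix_apply_ne _ _ _ h, diagonal_apply, h]

lemma charpoly_diagonal' {n : Type*} [Fintype n] [DecidableEq n] (v : n → ℝ) :
    (Matrix.diagonal v).charpoly = ∏ i, (X - C (v i)) := by
  rw [Matrix.charpoly]
  have : charmatrix (Matrix.diagonal v) = Matrix.diagonal (fun i => X - C (v i)) := by
    ext i j
    by_cases h : i = j
    · subst h; simp
    · simp [charmatrix_apply_ne _ _ _ h, diagonal_apply, h]
  rw [this, det_diagonal]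

lemma charpoly_rankOne {n : Type*} [Fintype n] [DecidableEq n] [Nonempty n] (u : n → ℝ) :
    (Matrix.of fun i j => u i * u j).charpoly
      = X ^ (Fintype.card n - 1) * (X - C (∑ i, u i * u i)) := by
  apply Polynomial.eq_of_infinite_eval_eq
  apply Set.Infinite.mono (s := ({(0:ℝ)}ᶜ : Set ℝ))
  swap
  · exact Set.Finite.infinite_compl (Set.finite_singleton 0)
  intro x hx
  have hx0 : x ≠ 0 := by simpa using hx
  simp only [Set.mem_setOf_eq]
  have hM : Matrix.diagonal (fun _ : n => x) - (Matrix.of fun i j => u i * u j)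
      = x • (1 + Matrix.replicateCol Unit ((-x⁻¹) • u) * Matrix.replicateRow Unit u) := by
    ext i j
    by_cases h : i = j
    · subst h
      simp [Matrix.mul_apply, Matrix.one_apply, diagonal_apply]
      field_simp
      ring
    · simp [Matrix.mul_apply, Matrix.one_apply, diagonal_apply, h]
      field_simp
  rw [eval_charpoly'', hM, det_smul, det_one_add_replicateCol_mul_replicateRow]
  have hcard : 1 ≤ Fintype.card n := Fintype.card_pos
  simp only [eval_mul, eval_pow, eval_X, eval_sub, eval_C, dotProduct, Pi.smul_apply,
    smul_eq_mul]
  have : ∑ i, u i * (-x⁻¹ * u i) = -x⁻¹ * ∑ i, u i * u i := by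
    rw [Finset.mul_sum]; congr 1; ext i; ring
  rw [this]
  have hexp : x ^ Fintype.card n = x ^ (Fintype.card n - 1) * x := by
    rw [← pow_succ, Nat.sub_add_cancel hcard]
  rw [hexp]
  field_simp
  ring

lemma roots_prod_X_sub_C' {ι : Type*} (s : Finset ι) (f : ι → ℝ) :
    (∏ i ∈ s, (X - C (f i))).roots = s.val.map f := by
  have : ∏ i ∈ s, (X - C (f i)) = ((s.val.map f).map (fun a => X - C a)).prod := by
    rw [Multiset.map_map]; rfl
  rw [this, Polynomial.roots_multiset_prod_X_sub_C]

lemma charpoly_eq_prod_eigenvalues {n : Type*} [Fintype n] [DecidableEq n]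
    {A : Matrix n n ℝ} (hA : A.IsHermitian) :
    A.charpoly = ∏ i, (X - C (hA.eigenvalues i)) := by
  have hstar : (star (hA.eigenvectorUnitary : Matrix n n ℝ))
      = (hA.eigenvectorUnitary : Matrix n n ℝ)ᵀ := by
    ext i j; simp [Matrix.star_apply]
  have hVVt : (hA.eigenvectorUnitary : Matrix n n ℝ)
      * (hA.eigenvectorUnitary : Matrix n n ℝ)ᵀ = 1 := by
    rw [← hstar]
    exact Matrix.mem_unitaryGroup_iff.mp hA.eigenvectorUnitary.2
  have hofReal : (RCLike.ofReal ∘ hA.eigenvalues : n → ℝ) = hA.eigenvalues := by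
    ext i; simp
  conv_lhs => rw [hA.spectral_theorem, Unitary.conjStarAlgAut_apply, hstar, hofReal]
  rw [charpoly_conj_orth _ _ hVVt, charpoly_diagonal']

/-- Eigenvalues of `R_m` : if `d₁ ≤ ⋯ ≤ d_k`, `R_ii = U_ii Λ_ii U_iiᵀ` with decreasing
eigenvalues `λ_{1,ii} ≥ ⋯ ≥ λ_{d_i,ii} ≥ 0` (set `λ_{j,ii} = 0` for `j > d_i`), then the
multiset of eigenvalues of `R_m` is `{λ_{j,11} + ⋯ + λ_{j,kk} : j = 0,…,q-1}` where
`q = d₁ + ⋯ + d_k`. -/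
theorem eigenvalues_Rmax {k : ℕ} (d : Fin k → ℕ) (hd : Monotone d)
    (U : ∀ i, Matrix (Fin (d i)) (Fin (d i)) ℝ)
    (hU : ∀ i, U i * (U i)ᵀ = 1)
    (lam : ∀ i, Fin (d i) → ℝ) (hpos : ∀ i j, 0 ≤ lam i j)
    (hdec : ∀ i, ∀ r s : Fin (d i), r ≤ s → lam i s ≤ lam i r)
    (hherm : (Rmax d U lam).IsHermitian) :
    Finset.univ.val.map hherm.eigenvalues =
      (Finset.range (∑ i, d i)).val.map
        (fun j => ∑ i, if h : j < d i then lam i ⟨j, h⟩ else 0) := by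
  classical
  set q : ℕ := ∑ i, d i with hq
  set μ : ℕ → ℝ := fun j => ∑ i, if h : j < d i then lam i ⟨j, h⟩ else 0 with hμ
  set Q : Matrix (Σ i, Fin (d i)) (Σ i, Fin (d i)) ℝ :=
    Matrix.of (fun p r : Σ i, Fin (d i) => if (p.2 : ℕ) = (r.2 : ℕ)
      then Real.sqrt (lam p.1 p.2) * Real.sqrt (lam r.1 r.2) else 0) with hQdef
  set P : Matrix (Σ i, Fin (d i)) (Σ i, Fin (d i)) ℝ := blockDiagonal' U with hPdef
  -- P is orthogonal
  have hPPt : P * Pᵀ = 1 := by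
    rw [hPdef, Matrix.blockDiagonal'_transpose, ← Matrix.blockDiagonal'_mul]
    simp only [hU]
    exact Matrix.blockDiagonal'_one
  -- Rmax = P * Q * Pᵀ
  have hRPQ : Rmax d U lam = P * Q * Pᵀ := by
    ext ⟨i, a⟩ ⟨j, b⟩
    rw [Matrix.mul_assoc, Matrix.mul_apply]
    rw [← Finset.univ_sigma_univ, Finset.sum_sigma]
    rw [Finset.sum_eq_single_of_mem i (Finset.mem_univ _)]
    · rw [Rmax]
      apply Finset.sum_congr rfl
      intro r _
      rw [hPdef, Matrix.blockDiagonal'_apply_eq, Matrix.mul_apply, ← Finset.univ_sigma_univ,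
        Finset.sum_sigma, Finset.mul_sum,
        Finset.sum_eq_single_of_mem j (Finset.mem_univ _)]
      · rw [Finset.mul_sum]
        apply Finset.sum_congr rfl
        intro s _
        rw [Matrix.transpose_apply, Matrix.blockDiagonal'_apply_eq]
        simp only [hQdef, Matrix.of_apply]
        split <;> ring
      · intro j' _ hj'
        apply mul_eq_zero_of_right
        apply Finset.sum_eq_zero
        intro s _
        rw [Matrix.transpose_apply, Matrix.blockDiagonal'_apply_ne _ _ _ hj'.symm]
        simp
    · intro i' _ hi'
      apply Finset.sum_eq_zero
      intro r _
      rw [hPdef, Matrix.blockDiagonal'_apply_ne _ _ _ (Ne.symm hi')]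
      simp
  -- Q is block triangular w.r.t. eigen-index
  set b : (Σ i, Fin (d i)) → ℕ := fun p => (p.2 : ℕ) with hbdef
  have hBT : Q.BlockTriangular b := by
    intro p r h
    exact if_neg (Nat.ne_of_gt h)
  set T : Finset ℕ := Finset.image b Finset.univ with hTdef
  set N : ℕ → ℕ := fun a => Fintype.card {p : Σ i, Fin (d i) // b p = a} with hNdef
  -- per-block charpoly
  have hblock : ∀ a ∈ T, (Q.toSquareBlock b a).charpoly
      = X ^ (N a - 1) * (X - C (μ a)) := by
    intro a ha
    obtain ⟨p0, _, hp0⟩ := Finset.mem_image.mp ha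
    haveI : Nonempty {p : Σ i, Fin (d i) // b p = a} := ⟨⟨p0, hp0⟩⟩
    have hsq : Q.toSquareBlock b a
        = Matrix.of fun p r : {p : Σ i, Fin (d i) // b p = a} =>
            Real.sqrt (lam p.1.1 p.1.2) * Real.sqrt (lam r.1.1 r.1.2) := by
      ext p r
      simp only [Matrix.toSquareBlock_def, Matrix.of_apply, hQdef]
      rw [if_pos (p.2.trans r.2.symm)]
    rw [hsq, charpoly_rankOne]
    congr 2
    rw [hμ]
    have hterm : ∀ p : {p : Σ i, Fin (d i) // b p = a},
        Real.sqrt (lam p.1.1 p.1.2) * Real.sqrt (lam p.1.1 p.1.2) = lam p.1.1 p.1.2 :=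
      fun p => Real.mul_self_sqrt (hpos _ _)
    rw [Finset.sum_congr rfl (fun p _ => hterm p)]
    rw [← Finset.sum_subtype (Finset.univ.filter (fun p : Σ i, Fin (d i) => b p = a))
      (by simp) (fun p => lam p.1 p.2)]
    rw [Finset.sum_filter, ← Finset.univ_sigma_univ, Finset.sum_sigma]
    apply congrArg
    apply Finset.sum_congr rfl
    intro i _
    by_cases h : a < d i
    · rw [dif_pos h, Finset.sum_eq_single_of_mem ⟨a, h⟩ (Finset.mem_univ _)]
      · simp [hbdef]
      · intro r _ hr
        rw [if_neg (by simpa [hbdef, Fin.ext_iff] using hr)]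
    · rw [dif_neg h]
      apply Finset.sum_eq_zero
      intro r _
      apply if_neg
      intro hc
      exact h (hc ▸ r.isLt)
  -- cardinality bookkeeping
  have hcardsigma : Fintype.card (Σ i, Fin (d i)) = q := by
    simp [Fintype.card_sigma, hq]
  have hNsum : ∑ a ∈ T, N a = q := by
    have h1 := Finset.card_eq_sum_card_fiberwise
      (f := b) (s := (Finset.univ : Finset (Σ i, Fin (d i)))) (t := T)
      (fun x _ => Finset.mem_image_of_mem b (Finset.mem_univ x))
    rw [Finset.card_univ, hcardsigma] at h1
    rw [h1]
    apply Finset.sum_congr rfl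
    intro a _
    rw [hNdef]
    simp [Fintype.card_subtype]
  have hNpos : ∀ a ∈ T, 1 ≤ N a := by
    intro a ha
    obtain ⟨p0, _, hp0⟩ := Finset.mem_image.mp ha
    haveI : Nonempty {p : Σ i, Fin (d i) // b p = a} := ⟨⟨p0, hp0⟩⟩
    exact Fintype.card_pos
  have hTsub : T ⊆ Finset.range q := by
    intro a ha
    obtain ⟨p0, _, hp0⟩ := Finset.mem_image.mp ha
    rw [Finset.mem_range, ← hp0]
    calc (b p0 : ℕ) < d p0.1 := p0.2.isLt
    _ ≤ q := Finset.single_le_sum (f := fun i => d i) (fun i _ => Nat.zero_le _)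
        (Finset.mem_univ p0.1)
  have hμ0 : ∀ j, j ∉ T → μ j = 0 := by
    intro j hj
    rw [hμ]
    apply Finset.sum_eq_zero
    intro i _
    rw [dif_neg]
    intro h
    exact hj (Finset.mem_image.mpr ⟨⟨i, ⟨j, h⟩⟩, Finset.mem_univ _, rfl⟩)
  -- the key product identity
  have hprod : ∏ a ∈ T, (X ^ (N a - 1) * (X - C (μ a)))
      = ∏ j ∈ Finset.range q, (X - C (μ j)) := by
    rw [Finset.prod_mul_distrib, Finset.prod_pow_eq_pow_sum]
    have hsub : ∑ a ∈ T, (N a - 1) = q - T.card := by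
      have h2 : ∑ a ∈ T, (N a - 1) + T.card = q := by
        rw [Finset.card_eq_sum_ones, ← Finset.sum_add_distrib]
        rw [Finset.sum_congr rfl (fun a ha => Nat.sub_add_cancel (hNpos a ha))]
        exact hNsum
      omega
    rw [hsub]
    rw [← Finset.prod_sdiff hTsub]
    have h3 : ∏ j ∈ Finset.range q \ T, (X - C (μ j)) = X ^ (q - T.card) := by
      rw [Finset.prod_congr rfl (fun j hj => by
        rw [hμ0 j (Finset.mem_sdiff.mp hj).2, map_zero, sub_zero])]
      rw [Finset.prod_const, Finset.card_sdiff_of_subset hTsub, Finset.card_range]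
    rw [h3, mul_comm]
  -- assemble charpoly equality
  have hcp : (Rmax d U lam).charpoly = ∏ j ∈ Finset.range q, (X - C (μ j)) := by
    rw [hRPQ, charpoly_conj_orth _ _ hPPt, hBT.charpoly,
      Finset.prod_congr rfl hblock, hprod]
  -- conclude via roots
  have h5 : (Rmax d U lam).charpoly = ∏ i, (X - C (hherm.eigenvalues i)) :=
    charpoly_eq_prod_eigenvalues hherm
  have h6 := congrArg Polynomial.roots (h5.symm.trans hcp)
  rw [roots_prod_X_sub_C', roots_prod_X_sub_C'] at h6
  exact h6
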